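/- For every n ≥ 1, if the superdiagonal entry d'(n) = A(n−1,n) of the Hurt-Sada array satisfies d'(n) ≥ n, then d'(n) = ⌊(2φ − 2)n + 1/2⌋. -/

import Mathlib

/-- The golden ratio `(1 + √5)/2`. -/
noncomputable def phi : ℝ := (1 + Real.sqrt 5) / 2

set_option maxHeartbeats 1000000
lemma s5_gt : 2 < Real.sqrt 5 := by
  have : (2:ℝ) = Real.sqrt 4 := by rw [show (4:ℝ) = 2^2 by norm_num, Real.sqrt_sq]; norm_num
  rw [this]; exact Real.sqrt_lt_sqrt (by norm_num) (by norm_num)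
lemma s5_lt : Real.sqrt 5 < 7/3 := by
  have := Real.sq_sqrt (show (0:ℝ) ≤ 5 by norm_num)
  nlinarith [Real.sqrt_nonneg 5]
lemma phi_gt : 3/2 < phi := by unfold phi; linarith [s5_gt]
lemma phi_lt : phi < 5/3 := by unfold phi; linarith [s5_lt]
lemma phi_pos : 0 < phi := by linarith [phi_gt]
lemma phi_mul : phi * phi = phi + 1 := by
  unfold phi
  have := Real.sq_sqrt (show (0:ℝ) ≤ 5 by norm_num)
  nlinarith
lemma phi_irr : Irrational phi := by
  have h5 : Irrational (Real.sqrt 5) := by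
    have := Nat.Prime.irrational_sqrt (p := 5) (by norm_num)
    simpa using this
  rintro ⟨q, hq⟩
  refine h5 ⟨2*q - 1, ?_⟩
  have : phi = (1 + Real.sqrt 5) / 2 := rfl
  push_cast
  rw [this] at hq; linarith [hq]
lemma nmul_phi_ne (m k : ℕ) (hm : m ≠ 0) : (m:ℝ) * phi ≠ k := by
  have h := phi_irr.ratCast_mul (q := m) (by exact_mod_cast hm)
  have := (by simpa using h : Irrational ((m:ℝ) * phi)).ne_int k
  simpa using this

noncomputable def g (m : ℕ) : ℕ := ⌊(m : ℝ) * phi⌋₊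

lemma nfloor_eq {x : ℝ} {k : ℕ} (h1 : (k:ℝ) ≤ x) (h2 : x < k + 1) : ⌊x⌋₊ = k := by
  have hx : 0 ≤ x := le_trans (Nat.cast_nonneg k) h1
  have hub : ⌊x⌋₊ < k + 1 := (Nat.floor_lt hx).2 (by push_cast; linarith)
  have hlb : k ≤ ⌊x⌋₊ := Nat.le_floor h1
  omega

lemma g_le (m : ℕ) : (g m : ℝ) ≤ (m:ℝ) * phi :=
  Nat.floor_le (mul_nonneg (Nat.cast_nonneg m) phi_pos.le)

lemma lt_g (m : ℕ) : (m:ℝ) * phi < (g m : ℝ) + 1 := by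
  have := Nat.lt_floor_add_one ((m:ℝ) * phi); exact_mod_cast this

lemma g_lt (m : ℕ) (hm : m ≠ 0) : (g m : ℝ) < (m:ℝ) * phi :=
  lt_of_le_of_ne (g_le m) (fun hc => nmul_phi_ne m (g m) hm hc.symm)

lemma g_eq {m k : ℕ} (h1 : (k:ℝ) ≤ (m:ℝ) * phi) (h2 : (m:ℝ) * phi < k + 1) : g m = k :=
  nfloor_eq h1 h2

lemma g_two : g 2 = 3 := g_eq (by push_cast; nlinarith [phi_gt]) (by push_cast; nlinarith [phi_lt])
lemma g_three : g 3 = 4 := g_eq (by push_cast; nlinarith [phi_gt]) (by push_cast; nlinarith [phi_lt])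

-- gap lemmas
lemma gap_ge (n : ℕ) : g (n+2) + 1 ≤ g (n+3) := by
  apply Nat.le_floor
  have h1 := g_le (n+2)
  push_cast
  push_cast at h1
  nlinarith [phi_gt]

lemma gap_le (n : ℕ) : g (n+3) ≤ g (n+2) + 2 := by
  have h1 := lt_g (n+2)
  have h2 : (↑(n+3):ℝ) * phi < ((g (n+2) + 3 : ℕ):ℝ) := by push_cast; push_cast at h1; nlinarith [phi_lt]
  have := (Nat.floor_lt (mul_nonneg (Nat.cast_nonneg _) phi_pos.le)).2 h2
  have h3 : g (n+3) < g (n+2) + 3 := this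
  omega

lemma g_ge_self (m : ℕ) : m ≤ g m := by
  apply Nat.le_floor; nlinarith [phi_gt, Nat.cast_nonneg (α := ℝ) m]

lemma g_lb2 (n : ℕ) : n + 3 ≤ g (n+2) := by
  apply Nat.le_floor; push_cast; nlinarith [phi_gt, Nat.cast_nonneg (α := ℝ) n]

lemma g_ub2 (n : ℕ) : g (n+2) ≤ 2*n + 3 := by
  have h2 : (↑(n+2):ℝ) * phi < ((2*n+4 : ℕ):ℝ) := by push_cast; nlinarith [phi_lt, Nat.cast_nonneg (α := ℝ) n]
  have h3 : g (n+2) < 2*n+4 := (Nat.floor_lt (mul_nonneg (Nat.cast_nonneg _) phi_pos.le)).2 h2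
  omega

noncomputable def cls (y : ℕ) : ℕ :=
  if g ⌊((y:ℝ) + 1) * (phi - 1)⌋₊ = y then ⌊((y:ℝ) + 1) * (phi - 1)⌋₊ - 1
  else ⌊((y:ℝ) + 1) * (2 - phi)⌋₊ - 1

lemma cls_large {s y : ℕ} (hs : s ≠ 0) (h : g s = y) : cls y = s - 1 := by
  have h1 : (y:ℝ) ≤ (s:ℝ) * phi := h ▸ g_le s
  have h2 : (s:ℝ) * phi < (y:ℝ) + 1 := by have := lt_g s; rw [h] at this; exact_mod_cast this
  have key : ⌊((y:ℝ) + 1) * (phi - 1)⌋₊ = s := by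
    apply nfloor_eq
    · nlinarith [phi_mul, phi_gt]
    · nlinarith [phi_mul, phi_gt, phi_lt]
  unfold cls
  rw [key, if_pos h]

lemma cls_small {t y : ℕ} (ht : t ≠ 0) (h : t + g t = y) : cls y = t - 1 := by
  have hu1 : ((g t : ℝ)) < (t:ℝ) * phi := g_lt t ht
  have hu2 : (t:ℝ) * phi < (g t : ℝ) + 1 := lt_g t
  have hy : (y:ℝ) = (t:ℝ) + (g t : ℝ) := by exact_mod_cast congrArg (Nat.cast (R := ℝ)) h.symm
  have hneg : ¬ (g ⌊((y:ℝ) + 1) * (phi - 1)⌋₊ = y) := by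
    intro hc
    set s := ⌊((y:ℝ) + 1) * (phi - 1)⌋₊ with hsdef
    have hs0 : s ≠ 0 := by
      intro h0
      rw [h0] at hc
      have : g 0 = 0 := by unfold g; simp
      omega
    have hc1 : (y:ℝ) ≤ (s:ℝ) * phi := hc ▸ g_le s
    have hc1' : (y:ℝ) < (s:ℝ) * phi :=
      lt_of_le_of_ne hc1 (fun e => nmul_phi_ne s y hs0 e.symm)
    have hc2 : (s:ℝ) * phi < (y:ℝ) + 1 := by have := lt_g s; rw [hc] at this; exact_mod_cast this
    -- s > y(phi-1), t > y(2-phi), s < (y+1)(phi-1), t < (y+1)(2-phi)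
    have e1 : (y:ℝ) * (phi - 1) < s := by nlinarith [phi_mul, phi_gt]
    have e2 : (y:ℝ) * (2 - phi) < t := by nlinarith [phi_mul, phi_gt, phi_lt]
    have e3 : (s:ℝ) < ((y:ℝ) + 1) * (phi - 1) := by nlinarith [phi_mul, phi_gt]
    have e4 : (t:ℝ) < ((y:ℝ) + 1) * (2 - phi) := by nlinarith [phi_mul, phi_gt, phi_lt]
    have hlt : (y:ℝ) < (s:ℝ) + t := by nlinarith
    have hgt : ((s:ℝ)) + t < (y:ℝ) + 1 := by nlinarith
    have l1 : y < s + t := by exact_mod_cast hlt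
    have l2 : s + t < y + 1 := by exact_mod_cast hgt
    omega
  have key : ⌊((y:ℝ) + 1) * (2 - phi)⌋₊ = t := by
    apply nfloor_eq
    · nlinarith [phi_mul, phi_gt, phi_lt]
    · nlinarith [phi_mul, phi_gt, phi_lt]
  unfold cls
  rw [if_neg hneg, key]

lemma cls_total (y : ℕ) (hy : 2 ≤ y) :
    (∃ s, s ≠ 0 ∧ g s = y) ∨ (∃ t, t ≠ 0 ∧ t + g t = y) := by
  set s := ⌊((y:ℝ) + 1) * (phi - 1)⌋₊ with hsdef
  set t := ⌊((y:ℝ) + 1) * (2 - phi)⌋₊ with htdef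
  have hy3 : (3:ℝ) ≤ (y:ℝ) + 1 := by
    have : (2:ℕ) ≤ y := hy
    have : (2:ℝ) ≤ (y:ℝ) := by exact_mod_cast this
    linarith
  have hpos1 : (0:ℝ) ≤ ((y:ℝ) + 1) * (phi - 1) := by nlinarith [phi_gt]
  have hpos2 : (0:ℝ) ≤ ((y:ℝ) + 1) * (2 - phi) := by nlinarith [phi_lt]
  have hs1 : (s:ℝ) ≤ ((y:ℝ) + 1) * (phi - 1) := Nat.floor_le hpos1
  have hs2 : ((y:ℝ) + 1) * (phi - 1) < (s:ℝ) + 1 := Nat.lt_floor_add_one _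
  have ht1 : (t:ℝ) ≤ ((y:ℝ) + 1) * (2 - phi) := Nat.floor_le hpos2
  have ht2 : ((y:ℝ) + 1) * (2 - phi) < (t:ℝ) + 1 := Nat.lt_floor_add_one _
  -- strictness of hs1 via irrationality
  have hs1' : (s:ℝ) < ((y:ℝ) + 1) * (phi - 1) := by
    rcases lt_or_eq_of_le hs1 with h | h
    · exact h
    · exfalso
      apply nmul_phi_ne (y+1) (s + (y+1)) (by omega)
      push_cast
      nlinarith [h]
  -- s + t = y
  have hsum1 : (s:ℝ) + t < (y:ℝ) + 1 := by nlinarith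
  have hsum2 : ((y:ℝ)) - 1 < (s:ℝ) + t := by nlinarith
  have l1 : s + t < y + 1 := by exact_mod_cast hsum1
  have l2 : y ≤ s + t := by
    have : (y:ℝ) < (s:ℝ) + t + 1 := by linarith
    have : y < s + t + 1 := by exact_mod_cast this
    omega
  have hst : s + t = y := by omega
  -- t ≠ 0 and s ≠ 0
  have hs0 : s ≠ 0 := by
    have : (1:ℝ) < ((y:ℝ) + 1) * (phi - 1) := by nlinarith [phi_gt]
    have : (1:ℝ) < (s:ℝ) + 1 := by linarith
    have : (0:ℕ) < s := by exact_mod_cast (by linarith : (0:ℝ) < (s:ℝ))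
    omega
  have ht0 : t ≠ 0 := by
    have : (1:ℝ) < ((y:ℝ) + 1) * (2 - phi) := by nlinarith [phi_lt]
    have : (0:ℕ) < t := by exact_mod_cast (by linarith : (0:ℝ) < (t:ℝ))
    omega
  by_cases hgs : g s = y
  · exact Or.inl ⟨s, hs0, hgs⟩
  · right
    refine ⟨t, ht0, ?_⟩
    -- upper bound: t + g t ≤ y
    have ht1' : (t:ℝ) < ((y:ℝ) + 1) * (2 - phi) := by
      rcases lt_or_eq_of_le ht1 with h | h
      · exact h
      · exfalso
        apply nmul_phi_ne (y+1) (2*(y+1) - t) (by omega)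
        have htle : t ≤ 2*(y+1) := by
          have : (t:ℝ) ≤ 2*((y:ℝ)+1) := by nlinarith [phi_gt]
          exact_mod_cast this
        push_cast [htle]
        nlinarith [h]
    have hyphi2 : ((y:ℝ) + 1) * phi * phi = ((y:ℝ)+1) * phi + ((y:ℝ)+1) := by
      rw [mul_assoc, phi_mul]; ring
    have hub : (t:ℝ) * phi < ((y:ℝ) + 1) - t := by
      have hm := mul_lt_mul_of_pos_right ht1' phi_pos
      nlinarith [hyphi2, ht1']
    have hgtub : t + g t < y + 1 := by
      have : ((g t : ℝ)) ≤ (t:ℝ) * phi := g_le t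
      have h2 : ((t + g t : ℕ):ℝ) < (y:ℝ) + 1 := by push_cast; linarith
      exact_mod_cast h2
    -- g s ≤ y - 1 (since g s ≤ y and ≠ y)
    have hgsy : g s ≤ y := by
      have h1 : (s:ℝ) * phi < (y:ℝ) + 1 := by
        have hm := mul_lt_mul_of_pos_right hs1' phi_pos
        have hsp2 : (s:ℝ) * phi * phi = (s:ℝ) * phi + s := by rw [mul_assoc, phi_mul]; ring
        have hyphi2 : ((y:ℝ) + 1) * phi * phi = ((y:ℝ)+1) * phi + ((y:ℝ)+1) := by
          rw [mul_assoc, phi_mul]; ring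
        nlinarith [hm, hyphi2]
      have : ((g s : ℕ):ℝ) < (y:ℝ) + 1 := lt_of_le_of_lt (g_le s) h1
      have : g s < y + 1 := by exact_mod_cast this
      omega
    -- suppose t + g t ≤ y - 1, derive contradiction
    by_contra hne
    have htg : t + g t ≤ y - 1 := by omega
    have hsphi : (s:ℝ) * phi < (y:ℝ) := by
      have : g s ≤ y - 1 := by omega
      have h2 : ((g s : ℕ):ℝ) ≤ (y:ℝ) - 1 := by
        have : ((g s:ℕ):ℝ) ≤ ((y-1:ℕ):ℝ) := by exact_mod_cast this
        have hc : ((y-1:ℕ):ℝ) = (y:ℝ) - 1 := by push_cast [Nat.cast_sub (by omega : 1 ≤ y)]; ring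
        linarith [hc ▸ this]
      linarith [lt_g s]
    have htphi : (t:ℝ) * phi < (y:ℝ) - t := by
      have : g t ≤ y - 1 - t := by omega
      have h2 : ((g t : ℕ):ℝ) ≤ (y:ℝ) - 1 - t := by
        have e : ((y - 1 - t:ℕ):ℝ) = (y:ℝ) - 1 - t := by
          push_cast [Nat.cast_sub (by omega : 1 ≤ y), Nat.cast_sub (by omega : t ≤ y - 1)]; ring
        have := (by exact_mod_cast this : ((g t:ℕ):ℝ) ≤ ((y-1-t:ℕ):ℝ))
        linarith [e ▸ this]
      linarith [lt_g t]
    -- s < y(phi-1), t < y(2-phi), so s + t < y: contradiction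
    have hsp2 : (s:ℝ) * phi * phi = (s:ℝ) * phi + s := by
      rw [mul_assoc, phi_mul]; ring
    have htp2 : (t:ℝ) * phi * phi = (t:ℝ) * phi + t := by
      rw [mul_assoc, phi_mul]; ring
    have e1 : (s:ℝ) < (y:ℝ) * (phi - 1) := by
      have hm := mul_lt_mul_of_pos_right hsphi (by nlinarith [phi_gt] : (0:ℝ) < phi - 1)
      nlinarith [hsp2]
    have e2 : (t:ℝ) < (y:ℝ) * (2 - phi) := by
      have hm := mul_lt_mul_of_pos_right htphi (by nlinarith [phi_lt] : (0:ℝ) < 2 - phi)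
      nlinarith [htp2, phi_lt, phi_gt]
    have hfin : (s:ℝ) + t < (y:ℝ) := by nlinarith
    have : s + t < y := by exact_mod_cast hfin
    omega

lemma I2 (n : ℕ) : g (g (n+2)) = g (n+2) + n + 1 := by
  set m := n + 2 with hm
  set a := g m with ha
  have hm0 : (m:ℕ) ≠ 0 := by omega
  have hmn : (m:ℝ) = (n:ℝ) + 2 := by rw [hm]; push_cast; ring
  have ha1 : (a:ℝ) < (m:ℝ) * phi := g_lt m hm0
  have ha2 : (m:ℝ) * phi < (a:ℝ) + 1 := lt_g m
  have hmp2 : (m:ℝ) * phi * phi = (m:ℝ) * phi + m := by rw [mul_assoc, phi_mul]; ring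
  have hT1 : ((a + n + 1 : ℕ):ℝ) ≤ (a:ℝ) * phi := by
    -- (1 - (mφ - a)) * (phi - 1) > 0
    have hp := mul_pos (by linarith : (0:ℝ) < 1 - ((m:ℝ)*phi - a))
      (by nlinarith [phi_gt] : (0:ℝ) < phi - 1)
    push_cast
    nlinarith [hp, hmp2, phi_lt, hmn]
  have hT2 : (a:ℝ) * phi < ((a + n + 1 : ℕ):ℝ) + 1 := by
    have hp := mul_pos (by linarith : (0:ℝ) < (m:ℝ)*phi - a)
      (by nlinarith [phi_gt] : (0:ℝ) < phi - 1)
    push_cast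
    nlinarith [hp, hmp2, hmn]
  have := g_eq hT1 hT2
  omega

lemma I1 (n P : ℕ) (hP : P + (n+2) = g (n+2)) (hd : g (n+3) = g (n+2) + 2) :
    g (P + 1) = n + 2 := by
  set m := n + 2 with hm
  set a := g m with ha
  have hm0 : (m:ℕ) ≠ 0 := by omega
  have hmn : (m:ℝ) = (n:ℝ) + 2 := by rw [hm]; push_cast; ring
  have ha1 : (a:ℝ) < (m:ℝ) * phi := g_lt m hm0
  have ha2 : (m:ℝ) * phi < (a:ℝ) + 1 := lt_g m
  have hb : (a:ℝ) + 2 < ((m:ℝ) + 1) * phi := by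
    have h1 : ((a + 2 : ℕ):ℝ) ≤ ((m+1:ℕ):ℝ) * phi := by
      rw [← hd]; exact_mod_cast g_le (m+1)
    have h2 : ((m+1:ℕ):ℝ) * phi ≠ ((a+2:ℕ):ℝ) := nmul_phi_ne (m+1) (a+2) (by omega)
    push_cast at h1 h2 ⊢
    rcases lt_or_eq_of_le h1 with h | h
    · linarith
    · exact absurd h.symm h2
  have hPr : (P:ℝ) = (a:ℝ) - m := by
    have := congrArg (Nat.cast (R := ℝ)) hP
    push_cast at this; linarith [hmn, this]
  have hmp2 : (m:ℝ) * phi * phi = (m:ℝ) * phi + m := by rw [mul_assoc, phi_mul]; ring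
  have hmp2' : ((m:ℝ)+1) * phi * phi = ((m:ℝ)+1) * phi + (m+1) := by rw [mul_assoc, phi_mul]; ring
  apply g_eq
  · -- m ≤ (P+1)φ
    have he := mul_lt_mul_of_pos_right ha2 phi_pos
    push_cast
    rw [hPr]
    nlinarith [he, hmp2, hmn]
  · have he := mul_lt_mul_of_pos_right hb phi_pos
    push_cast
    rw [hPr]
    nlinarith [he, hmp2', hmn]

lemma I3 (n : ℕ) (hd : g (n+3) = g (n+2) + 2) :
    g (g (n+2) + 1) = g (n+2) + n + 3 := by
  set b := g (n+3) with hb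
  have hb1 : (b:ℝ) < ((n:ℝ)+3) * phi := by
    have := g_lt (n+3) (by omega); push_cast at this ⊢; linarith
  have hb2 : ((n:ℝ)+3) * phi < (b:ℝ) + phi - 1 := by
    have := lt_g (n+2)
    push_cast at this ⊢
    have hbc : (b:ℝ) = (g (n+2) : ℝ) + 2 := by exact_mod_cast congrArg (Nat.cast (R := ℝ)) hd
    nlinarith [this, hbc]
  have hnp2 : ((n:ℝ)+3) * phi * phi = ((n:ℝ)+3) * phi + ((n:ℝ)+3) := by rw [mul_assoc, phi_mul]; ring
  have hkey : g (b - 1) = b + n + 1 := by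
    have hble : 2 ≤ b := by have := g_lb2 (n+1); omega
    have hbr : ((b - 1 : ℕ):ℝ) = (b:ℝ) - 1 := by push_cast [Nat.cast_sub (by omega : 1 ≤ b)]; ring
    apply g_eq
    · -- b + n + 1 ≤ (b-1)φ : (2-φ) - θ'(φ-1) ≥ 0
      have hp := mul_pos
        (by linarith : (0:ℝ) < (phi - 1) - (((n:ℝ)+3) * phi - b))
        (by nlinarith [phi_gt] : (0:ℝ) < phi - 1)
      have he := mul_lt_mul_of_pos_right hb1 phi_pos
      rw [hbr]
      push_cast
      nlinarith [hp, hnp2, phi_mul]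
    · have he := mul_lt_mul_of_pos_right hb1 phi_pos
      rw [hbr]
      push_cast
      nlinarith [he, hnp2, hb2, phi_gt]
  have : b - 1 = g (n+2) + 1 := by omega
  rw [this] at hkey
  omega

noncomputable def F (n j : ℕ) : ℕ :=
  if g (n+2) ≤ j + n + 2 ∧ j + n + 2 ≤ g (n+2) + n then cls (j + n + 2) else j


/-- The Hurt-Sada array `A : ℕ → ℕ → ℕ`.  Row `0` is the identity sequence;
row `n+1` is obtained from row `n` by moving the entry `n+1` (located at the unique
position `p` with `A n p = n+1`) by `n+1` places to the right, shifting the jumped-over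
entries one place left. -/
noncomputable def A : ℕ → ℕ → ℕ
  | 0, k => k
  | n + 1, j =>
    let p := sInf {i | A n i = n + 1}
    if j < p then A n j
    else if j < p + (n + 1) then A n (j + 1)
    else if j = p + (n + 1) then n + 1
    else A n j

lemma A_zero (j : ℕ) : A 0 j = F 0 j := by
  have hA : A 0 j = j := by simp [A]
  rw [hA]
  unfold F
  by_cases hj : j = 1
  · subst hj
    rw [if_pos (by rw [g_two]; omega)]
    have : (1:ℕ) + 0 + 2 = g 2 := by rw [g_two]
    rw [this, cls_large (by omega : (2:ℕ) ≠ 0) rfl]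
  · rw [if_neg (by rw [g_two]; omega)]

lemma A_step (n : ℕ) (IH : ∀ j, A n j = F n j) (j : ℕ) : A (n+1) j = F (n+1) j := by
  have hG1 := gap_ge n
  have hG2 := gap_le n
  have hGlb := g_lb2 n
  have hGub := g_ub2 n
  obtain ⟨P, hP⟩ : ∃ P, P + (n+2) = g (n+2) := ⟨g (n+2) - (n+2), by omega⟩
  have hGn1 : g (n+3) ≤ g (n+2) + n + 1 := by
    cases n with
    | zero => rw [g_two, g_three]
    | succ k =>
      have := gap_le (k+1)
      omega
  have hmem : A n P = n + 1 := by
    rw [IH P]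
    unfold F
    rw [if_pos (by omega)]
    have hPe : P + n + 2 = g (n+2) := by omega
    rw [hPe, cls_large (by omega : (n+2:ℕ) ≠ 0) rfl]
    omega
  have hlow : ∀ i, i < P → A n i ≠ n + 1 := by
    intro i hi
    rw [IH i]
    unfold F
    rw [if_neg (by omega)]
    omega
  have hsinf : sInf {i | A n i = n + 1} = P := by
    have hmem' : P ∈ {i | A n i = n + 1} := hmem
    have h1 : sInf {i | A n i = n+1} ≤ P := Nat.sInf_le hmem'
    have h2 := Nat.sInf_mem (⟨P, hmem'⟩ : {i | A n i = n + 1}.Nonempty)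
    rcases Nat.lt_or_ge (sInf {i | A n i = n+1}) P with h | h
    · exact absurd h2 (hlow _ h)
    · omega
  have hA : A (n+1) j = if j < P then A n j else if j < P + (n+1) then A n (j+1)
      else if j = P + (n+1) then n+1 else A n j := by
    simp only [A]
    rw [hsinf]
  have hF : F (n+1) j = if g (n+3) ≤ j+n+3 ∧ j+n+3 ≤ g (n+3) + (n+1) then cls (j+n+3) else j := by
    unfold F
    simp only [show n+1+2 = n+3 from by omega, show j+(n+1)+2 = j+n+3 from by omega]
  rw [hA, hF]
  by_cases h1 : j < P
  · rw [if_pos h1, IH j]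
    have hFj : F n j = j := by unfold F; rw [if_neg (by omega)]
    rw [hFj, if_neg (by omega)]
  · rw [if_neg h1]
    by_cases h2 : j < P + (n+1)
    · rw [if_pos h2, IH (j+1)]
      have hFn : F n (j+1) = if g (n+2) ≤ j+n+3 ∧ j+n+3 ≤ g (n+2) + n then cls (j+n+3)
          else (j+1) := by
        unfold F
        simp only [show j+1+n+2 = j+n+3 from by omega]
      rw [hFn]
      by_cases h3 : j < P + n
      · rw [if_pos (by omega)]
        by_cases h4 : g (n+3) ≤ j + n + 3
        · rw [if_pos (by omega)]
        · rw [if_neg (by omega)]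
          have hd : g (n+3) = g (n+2) + 2 := by omega
          have hy : j + n + 3 = (P+1) + g (P+1) := by
            have := I1 n P hP hd
            omega
          rw [hy, cls_small (by omega : P+1 ≠ 0) rfl]
          omega
      · rw [if_neg (by omega), if_pos (by omega)]
        have hy : j + n + 3 = g (g (n+2)) := by rw [I2 n]; omega
        rw [hy, cls_large (by omega : g (n+2) ≠ 0) rfl]
        omega
    · rw [if_neg h2]
      by_cases h3 : j = P + (n+1)
      · rw [if_pos h3, if_pos (by omega)]
        have hy : j + n + 3 = (n+2) + g (n+2) := by omega
        rw [hy, cls_small (by omega : (n+2:ℕ) ≠ 0) rfl]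
        omega
      · rw [if_neg h3, IH j]
        have hFj : F n j = j := by unfold F; rw [if_neg (by omega)]
        rw [hFj]
        by_cases h4 : g (n+3) ≤ j+n+3 ∧ j+n+3 ≤ g (n+3) + (n+1)
        · rw [if_pos h4]
          have hd : g (n+3) = g (n+2) + 2 := by omega
          have hy : j + n + 3 = g (g (n+2) + 1) := by rw [I3 n hd]; omega
          rw [hy, cls_large (by omega : g (n+2) + 1 ≠ 0) rfl]
          omega
        · rw [if_neg h4]

lemma A_eq_F : ∀ n j, A n j = F n j := by
  intro n
  induction n with
  | zero => exact A_zero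
  | succ k ih => exact A_step k ih

theorem superdiagonal_ge_formula (n : ℕ) (hn : 1 ≤ n) (h : n ≤ A (n - 1) n) :
    A (n - 1) n = ⌊(2 * phi - 2) * (n : ℝ) + 1 / 2⌋₊ := by
  obtain ⟨m, rfl⟩ : ∃ m, n = m + 1 := ⟨n - 1, by omega⟩
  have hidx : m + 1 - 1 = m := by omega
  rw [hidx] at h ⊢
  have hval : A m (m+1) = cls (2*m+3) := by
    rw [A_eq_F]
    unfold F
    rw [if_pos (by have := g_lb2 m; have := g_ub2 m; omega)]
    simp only [show (m+1)+m+2 = 2*m+3 from by omega]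
  rw [hval] at h ⊢
  rcases cls_total (2*m+3) (by omega) with ⟨s, hs0, hgs⟩ | ⟨t, ht0, hgt⟩
  · -- large case
    rw [cls_large hs0 hgs] at h ⊢
    have hs1 : ((2*m+3 : ℕ):ℝ) ≤ (s:ℝ) * phi := hgs ▸ g_le s
    have hs1' : ((2*m+3 : ℕ):ℝ) < (s:ℝ) * phi :=
      lt_of_le_of_ne hs1 (fun e => nmul_phi_ne s (2*m+3) hs0 e.symm)
    have hs2 : (s:ℝ) * phi < ((2*m+3 : ℕ):ℝ) + 1 := by
      have := lt_g s; rw [hgs] at this; exact_mod_cast this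
    have hsp : (s:ℝ) * phi * phi = (s:ℝ) * phi + s := by rw [mul_assoc, phi_mul]; ring
    have hcast : ((s-1:ℕ):ℝ) = (s:ℝ) - 1 := by
      push_cast [Nat.cast_sub (by omega : 1 ≤ s)]; ring
    refine (nfloor_eq ?_ ?_).symm
    · rw [hcast]
      have he := mul_lt_mul_of_pos_right hs2 (by nlinarith [phi_gt] : (0:ℝ) < phi - 1)
      push_cast at he hs1' hs2 ⊢
      nlinarith [hsp, phi_lt, phi_gt]
    · rw [hcast]
      have he := mul_lt_mul_of_pos_right hs1' (by nlinarith [phi_gt] : (0:ℝ) < phi - 1)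
      push_cast at he ⊢
      nlinarith [hsp, phi_lt, phi_gt]
  · -- small case: contradiction
    exfalso
    rw [cls_small ht0 hgt] at h
    have := g_ge_self t
    omega
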